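/- Let n ≤ B be positive integers, let 0 ≤ p ≤ 2/n, and let X ∼ Binomial(B, p). Then for every δ' with 0 < δ' ≤ e^{-1}, P( X > (10B/n)·log(1/δ') ) ≤ δ'. -/

import Mathlib

open MeasureTheory ProbabilityTheory
open scoped ENNReal NNReal

lemma exp_sixth_fifth_le_five : Real.exp (6/5) ≤ 5 := by
  have h1 : Real.exp (6/5) ^ (5:ℕ) = Real.exp 6 := by
    rw [← Real.exp_nat_mul]; norm_num
  have h2 : Real.exp 6 = Real.exp 1 ^ (6:ℕ) := by
    rw [← Real.exp_nat_mul]; norm_num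
  have h3 : Real.exp 1 ^ (6:ℕ) ≤ 2.7182818286 ^ (6:ℕ) :=
    pow_le_pow_left₀ (Real.exp_pos 1).le Real.exp_one_lt_d9.le 6
  have h4 : (2.7182818286:ℝ) ^ (6:ℕ) ≤ 5 ^ (5:ℕ) := by norm_num
  have h5 : Real.exp (6/5) ^ (5:ℕ) ≤ 5 ^ (5:ℕ) := by
    rw [h1, h2]; exact h3.trans h4
  exact le_of_pow_le_pow_left₀ (by norm_num) (by norm_num) h5

lemma log_five_ge : (6/5 : ℝ) ≤ Real.log 5 := by
  rw [Real.le_log_iff_exp_le (by norm_num)]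
  exact exp_sixth_fifth_le_five

set_option maxHeartbeats 1000000 in
lemma aux_real (n B : ℕ) (hn : 0 < n) (hnB : n ≤ B)
    (δ' : ℝ) (hδ0 : 0 < δ') (hδe : δ' ≤ Real.exp (-1)) :
    ∑ k ∈ Finset.range (B+1),
      (if 10 * B / n * Real.log (1/δ') < (k:ℝ) then (B.choose k : ℝ) * (2/n)^k else 0)
      ≤ δ' := by
  set L := Real.log (1/δ') with hLdef
  have hδ'inv : Real.exp 1 ≤ 1/δ' := by
    have h1 : 1/Real.exp (-1) ≤ 1/δ' := one_div_le_one_div_of_le hδ0 hδe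
    rwa [Real.exp_neg, one_div, inv_inv] at h1
  have hL1 : 1 ≤ L := by
    rw [hLdef, Real.le_log_iff_exp_le (by positivity)]
    simpa using hδ'inv
  have hL0 : 0 < L := lt_of_lt_of_le one_pos hL1
  set t := 10 * (B:ℝ) / n * L with htdef
  have hn' : (0:ℝ) < n := by exact_mod_cast hn
  have hBn : (1:ℝ) ≤ (B:ℝ)/n := by
    rw [le_div_iff₀ hn']
    simpa using Nat.cast_le (α := ℝ) |>.mpr hnB
  have ht10 : 10 * L ≤ t := by
    have heq : 10 * (B:ℝ) / n * L = 10 * ((B:ℝ)/n) * L := by ring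
    rw [htdef, heq]
    nlinarith
  have ht0 : 0 < t := lt_of_lt_of_le (by nlinarith) ht10
  set r := (5*L)⁻¹ with hrdef
  have hr0 : 0 < r := by positivity
  have hr5 : r ≤ 1/5 := by
    rw [hrdef, one_div]
    apply inv_anti₀ (by norm_num)
    nlinarith
  have hr1 : r ≤ 1 := hr5.trans (by norm_num)
  have h1r : (0:ℝ) < 1 - r := by nlinarith
  set m := ⌊t⌋₊ + 1 with hmdef
  -- termwise bound
  have hterm : ∀ k ∈ Finset.range (B+1),
      (if t < (k:ℝ) then (B.choose k : ℝ) * (2/n)^k else 0)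
      ≤ (if m ≤ k then Real.exp t * r^k else 0) := by
    intro k _
    have hcond : (t < (k:ℝ)) ↔ (m ≤ k) := by
      rw [hmdef, Nat.add_one_le_iff, Nat.floor_lt ht0.le]
    by_cases h : t < (k:ℝ)
    · rw [if_pos h, if_pos (hcond.mp h)]
      have h1 : (B.choose k : ℝ) ≤ (B:ℝ)^k / k.factorial := by
        have := Nat.choose_le_pow_div (α := ℝ) k B
        simpa using this
      have h2 : (B.choose k : ℝ) * (2/n)^k ≤ ((B:ℝ)^k / k.factorial) * (2/n)^k :=
        mul_le_mul_of_nonneg_right h1 (by positivity)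
      have hbr : (B:ℝ) * (2/n) = t * r := by
        rw [htdef, hrdef]
        field_simp
        ring
      have h3 : ((B:ℝ)^k / k.factorial) * (2/n)^k = t^k / k.factorial * r^k := by
        rw [div_mul_eq_mul_div, div_mul_eq_mul_div, ← mul_pow, ← mul_pow, hbr]
      have h4 : t^k / k.factorial ≤ Real.exp t := Real.pow_div_factorial_le_exp t ht0.le k
      calc (B.choose k : ℝ) * (2/n)^k ≤ t^k / k.factorial * r^k := by rw [← h3]; exact h2
        _ ≤ Real.exp t * r^k := mul_le_mul_of_nonneg_right h4 (by positivity)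
    · rw [if_neg h, if_neg (fun hm => h (hcond.mpr hm))]
  have hsum1 := Finset.sum_le_sum hterm
  -- geometric sum bound
  have hsum2 : ∑ k ∈ Finset.range (B+1), (if m ≤ k then Real.exp t * r^k else 0)
      ≤ Real.exp t * (r^m * (1-r)⁻¹) := by
    rw [← Finset.sum_filter, ← Finset.mul_sum]
    apply mul_le_mul_of_nonneg_left _ (Real.exp_pos t).le
    have hsub : Finset.filter (fun k => m ≤ k) (Finset.range (B+1)) ⊆ Finset.Ico m (B+1) := by
      intro k hk
      simp only [Finset.mem_filter, Finset.mem_range] at hk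
      simp [Finset.mem_Ico, hk.1, hk.2]
    calc ∑ k ∈ Finset.filter (fun k => m ≤ k) (Finset.range (B+1)), r^k
        ≤ ∑ k ∈ Finset.Ico m (B+1), r^k :=
          Finset.sum_le_sum_of_subset_of_nonneg hsub (fun k _ _ => by positivity)
      _ ≤ r^m * (1-r)⁻¹ := by
          by_cases hmB : m ≤ B + 1
          · rw [Finset.sum_Ico_eq_sum_range]
            have hsplit : ∑ j ∈ Finset.range (B+1-m), r^(m+j)
                = r^m * ∑ j ∈ Finset.range (B+1-m), r^j := by
              rw [Finset.mul_sum]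
              exact Finset.sum_congr rfl (fun j _ => pow_add r m j)
            rw [hsplit]
            apply mul_le_mul_of_nonneg_left _ (by positivity)
            have hr1' : r < 1 := lt_of_le_of_lt hr5 (by norm_num)
            rw [geom_sum_eq (ne_of_lt hr1')]
            have heq : (r^(B+1-m) - 1)/(r-1) = (1 - r^(B+1-m))/(1-r) := by
              rw [div_eq_div_iff (by nlinarith) (by nlinarith)]
              ring
            rw [heq, ← one_div]
            exact div_le_div₀ (by norm_num) (by nlinarith [pow_nonneg hr0.le (B+1-m)]) h1r le_rfl
          · rw [Finset.Ico_eq_empty (by omega), Finset.sum_empty]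
            positivity
  -- final bound
  have hfinal : Real.exp t * (r^m * (1-r)⁻¹) ≤ δ' := by
    have hrm : r^m ≤ Real.exp (-(Real.log (5*L)) * t) := by
      have h1 : r^m = r ^ ((m:ℕ):ℝ) := by rw [Real.rpow_natCast]
      have h2 : r ^ ((m:ℕ):ℝ) ≤ r ^ t := by
        apply Real.rpow_le_rpow_of_exponent_ge hr0 hr1
        rw [hmdef]
        push_cast
        exact (Nat.lt_floor_add_one t).le
      have h3 : r ^ t = Real.exp (Real.log r * t) := Real.rpow_def_of_pos hr0 t
      have h4 : Real.log r = -(Real.log (5*L)) := by rw [hrdef, Real.log_inv]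
      rw [h1]
      rw [h3, h4] at h2
      exact h2
    have hinv : (1-r)⁻¹ ≤ 5/4 := by
      rw [← one_div]
      rw [div_le_div_iff₀ h1r (by norm_num)]
      nlinarith
    have hlog5L : (6/5:ℝ) ≤ Real.log (5*L) := by
      rw [Real.log_mul (by norm_num) (ne_of_gt hL0)]
      have := Real.log_nonneg hL1
      linarith [log_five_ge]
    have hexp : Real.exp t * Real.exp (-(Real.log (5*L)) * t)
        = Real.exp (t * (1 - Real.log (5*L))) := by
      rw [← Real.exp_add]; congr 1; ring
    have hE : t * (1 - Real.log (5*L)) ≤ -L - 1 := by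
      set s := Real.log (5*L) with hsdef
      have hs1 : 1 - s ≤ -(1/5) := by linarith
      have hs2 : t * (1 - s) ≤ 10*L * (1 - s) :=
        mul_le_mul_of_nonpos_right ht10 (by linarith)
      have hs3 : 10*L * (1 - s) ≤ 10*L * (-(1/5)) :=
        mul_le_mul_of_nonneg_left hs1 (by linarith)
      linarith
    have hend : Real.exp (-L - 1) * (5/4) ≤ δ' := by
      have hδ : Real.exp (-L) = δ' := by
        rw [hLdef, one_div, Real.log_inv, neg_neg, Real.exp_log hδ0]
      have he1 : Real.exp (-L - 1) = Real.exp (-L) * Real.exp (-1) := by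
        rw [← Real.exp_add]; ring_nf
      have h2e : (2:ℝ) ≤ Real.exp 1 := le_trans (by norm_num) Real.exp_one_gt_d9.le
      have he2 : Real.exp (-1) ≤ 1/2 := by
        rw [Real.exp_neg]
        rw [inv_le_comm₀ (Real.exp_pos 1) (by norm_num)]
        simpa using h2e
      rw [he1, ← hδ]
      nlinarith [Real.exp_pos (-L)]
    calc Real.exp t * (r^m * (1-r)⁻¹)
        ≤ Real.exp t * (Real.exp (-(Real.log (5*L)) * t) * (5/4)) := by
          apply mul_le_mul_of_nonneg_left _ (Real.exp_pos t).le
          exact mul_le_mul hrm hinv (by positivity) (Real.exp_pos _).le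
      _ = Real.exp (t * (1 - Real.log (5*L))) * (5/4) := by rw [← mul_assoc, hexp]
      _ ≤ Real.exp (-L - 1) * (5/4) :=
          mul_le_mul_of_nonneg_right (Real.exp_le_exp.mpr hE) (by norm_num)
      _ ≤ δ' := hend
  exact hsum1.trans (hsum2.trans hfinal)

set_option maxHeartbeats 1000000 in
/-- **Chernoff-type tail bound for the number of affected samples.** If
`X ∼ Binomial(B, p)` with `n ≤ B` and `p ≤ 2/n`, then for every `0 < δ' ≤ e⁻¹`,
`P(X > (10B/n)·log(1/δ')) ≤ δ'`. -/
theorem binomial_tail_bound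
    (n B : ℕ) (hn : 0 < n) (hnB : n ≤ B)
    (p : ℝ≥0∞) (hp1 : p ≤ 1) (hp : p ≤ ENNReal.ofReal (2 / n)) :
    ∀ δ' : ℝ, 0 < δ' → δ' ≤ Real.exp (-1) →
      (PMF.binomial p.toNNReal
          (by simpa using ENNReal.toNNReal_mono ENNReal.one_ne_top hp1) B).toMeasure
          {k : Fin (B + 1) | 10 * B / n * Real.log (1 / δ') < (k : ℝ)}
        ≤ ENNReal.ofReal δ' := by
  intro δ' hδ0 hδe
  classical
  set S := {k : Fin (B + 1) | 10 * B / n * Real.log (1 / δ') < (k : ℝ)} with hSdef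
  have hS : MeasurableSet S := trivial
  rw [PMF.toMeasure_apply _ hS, tsum_fintype]
  have hbound : ∀ k : Fin (B+1),
      S.indicator (⇑(PMF.binomial p.toNNReal (by simpa using ENNReal.toNNReal_mono ENNReal.one_ne_top hp1) B)) k
      ≤ ENNReal.ofReal (if 10 * B / n * Real.log (1/δ') < ((k:ℕ):ℝ)
          then (B.choose (k:ℕ) : ℝ) * (2/n)^(k:ℕ) else 0) := by
    intro k
    by_cases h : k ∈ S
    · have hcond : 10 * (B:ℝ) / n * Real.log (1/δ') < ((k:ℕ):ℝ) := h
      rw [Set.indicator_of_mem h, if_pos hcond]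
      refine le_trans (le_of_eq (PMF.binomial_apply _ _ _ _)) ?_
      push_cast
      rw [ENNReal.coe_toNNReal (ne_top_of_le_ne_top ENNReal.one_ne_top hp1)]
      have h1 : p ^ (k:ℕ) ≤ ENNReal.ofReal ((2/n)^(k:ℕ)) := by
        rw [ENNReal.ofReal_pow (by positivity)]
        exact pow_le_pow_left' hp _
      have h2 : (1-p) ^ ((Fin.last B).val - k.val) ≤ 1 :=
        pow_le_one' tsub_le_self _
      have key : p ^ (k:ℕ) * (1-p) ^ ((Fin.last B).val - k.val) * (B.choose (k:ℕ) : ℝ≥0∞)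
          ≤ ENNReal.ofReal ((2/n)^(k:ℕ)) * 1 * (B.choose (k:ℕ) : ℝ≥0∞) := by
        gcongr
      refine key.trans (le_of_eq ?_)
      rw [mul_one, ← ENNReal.ofReal_natCast (B.choose (k:ℕ)),
        ← ENNReal.ofReal_mul (by positivity), mul_comm]
    · rw [Set.indicator_of_notMem h]
      exact zero_le
  calc ∑ k : Fin (B+1), S.indicator (⇑(PMF.binomial p.toNNReal (by simpa using ENNReal.toNNReal_mono ENNReal.one_ne_top hp1) B)) k
      ≤ ∑ k : Fin (B+1), ENNReal.ofReal (if 10 * B / n * Real.log (1/δ') < ((k:ℕ):ℝ)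
          then (B.choose (k:ℕ) : ℝ) * (2/n)^(k:ℕ) else 0) :=
        Finset.sum_le_sum (fun k _ => hbound k)
    _ = ENNReal.ofReal (∑ k : Fin (B+1), if 10 * B / n * Real.log (1/δ') < ((k:ℕ):ℝ)
          then (B.choose (k:ℕ) : ℝ) * (2/n)^(k:ℕ) else 0) := by
        rw [ENNReal.ofReal_sum_of_nonneg]
        intro k _
        split_ifs with h
        · positivity
        · exact le_rfl
    _ ≤ ENNReal.ofReal δ' := by
        apply ENNReal.ofReal_le_ofReal
        rw [Fin.sum_univ_eq_sum_range (fun k => if 10 * B / n * Real.log (1/δ') < (k:ℝ)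
          then (B.choose k : ℝ) * (2/n)^k else 0)]
        exact aux_real n B hn hnB δ' hδ0 hδe
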